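/- For each fixed admissible hypercomplex basis (I₁,I₂,I₃) of V = ℍⁿ, the map sending v* ∈ V* to the endomorphism v ↦ v*(v)·id + v ⊗ v* − Σ_α [v*(I_α v) I_α + I_α v ⊗ (v* ∘ I_α)] takes values in the Lie algebra gl_n(ℍ) ⊕ sp₁ ⊂ gl(V), i.e., each such endomorphism commutes with the quaternionic structure Q up to rotation of Q (it preserves the 3-plane Q under bracket). -/

import Mathlib

open scoped Quaternion

/-- Right multiplication by a fixed quaternion on `ℍⁿ`, as an ℝ-linear endomorphism. -/
noncomputable def Rmul (n : ℕ) (h : ℍ[ℝ]) : Module.End ℝ (Fin n → ℍ[ℝ]) :=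
  LinearMap.pi fun m => (LinearMap.mulRight ℝ h).comp (LinearMap.proj m)

/-- The standard hypercomplex structure `I₁ = −R_i, I₂ = −R_j, I₃ = −R_k` of `ℍⁿ`. -/
noncomputable def Istd (n : ℕ) : Fin 3 → Module.End ℝ (Fin n → ℍ[ℝ])
  | 0 => -(Rmul n ⟨0, 1, 0, 0⟩)
  | 1 => -(Rmul n ⟨0, 0, 1, 0⟩)
  | 2 => -(Rmul n ⟨0, 0, 0, 1⟩)

/-- The standard quaternionic structure `Q = span(I₁, I₂, I₃)` of `ℍⁿ`. -/
noncomputable def Qstd (n : ℕ) : Submodule ℝ (Module.End ℝ (Fin n → ℍ[ℝ])) :=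
  Submodule.span ℝ (Set.range (Istd n))

lemma Rmul_mul (n : ℕ) (a b : ℍ[ℝ]) : Rmul n a * Rmul n b = Rmul n (b * a) := by
  apply LinearMap.ext; intro w; funext m
  simp [Rmul, mul_assoc]

lemma Rmul_one (n : ℕ) : Rmul n 1 = 1 := by
  apply LinearMap.ext; intro w; funext m; simp [Rmul]

lemma Rmul_neg (n : ℕ) (a : ℍ[ℝ]) : Rmul n (-a) = -(Rmul n a) := by
  apply LinearMap.ext; intro w; funext m; simp [Rmul]

lemma negRmul_mul (n : ℕ) (a b : ℍ[ℝ]) : (-Rmul n a) * (-Rmul n b) = Rmul n (b * a) := by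
  rw [neg_mul_neg (Rmul n a) (Rmul n b), Rmul_mul]

section
variable (n : ℕ)
lemma I00 : Istd n 0 * Istd n 0 = -1 := by
  show (-Rmul n _) * (-Rmul n _) = -1
  erw [negRmul_mul, show ((⟨0,1,0,0⟩:ℍ[ℝ]) * ⟨0,1,0,0⟩) = -1 by ext <;> simp, Rmul_neg, Rmul_one]
lemma I11 : Istd n 1 * Istd n 1 = -1 := by
  show (-Rmul n _) * (-Rmul n _) = -1
  erw [negRmul_mul, show ((⟨0,0,1,0⟩:ℍ[ℝ]) * ⟨0,0,1,0⟩) = -1 by ext <;> simp, Rmul_neg, Rmul_one]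
lemma I22 : Istd n 2 * Istd n 2 = -1 := by
  show (-Rmul n _) * (-Rmul n _) = -1
  erw [negRmul_mul, show ((⟨0,0,0,1⟩:ℍ[ℝ]) * ⟨0,0,0,1⟩) = -1 by ext <;> simp, Rmul_neg, Rmul_one]
lemma I01 : Istd n 0 * Istd n 1 = Istd n 2 := by
  show (-Rmul n _) * (-Rmul n _) = -(Rmul n _)
  erw [negRmul_mul, show ((⟨0,0,1,0⟩:ℍ[ℝ]) * ⟨0,1,0,0⟩) = -⟨0,0,0,1⟩ by ext <;> simp, Rmul_neg]
lemma I10 : Istd n 1 * Istd n 0 = -Istd n 2 := by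
  show (-Rmul n _) * (-Rmul n _) = - -(Rmul n _)
  erw [negRmul_mul, show ((⟨0,1,0,0⟩:ℍ[ℝ]) * ⟨0,0,1,0⟩) = ⟨0,0,0,1⟩ by ext <;> simp, neg_neg]
lemma I12 : Istd n 1 * Istd n 2 = Istd n 0 := by
  show (-Rmul n _) * (-Rmul n _) = -(Rmul n _)
  erw [negRmul_mul, show ((⟨0,0,0,1⟩:ℍ[ℝ]) * ⟨0,0,1,0⟩) = -⟨0,1,0,0⟩ by ext <;> simp, Rmul_neg]
lemma I21 : Istd n 2 * Istd n 1 = -Istd n 0 := by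
  show (-Rmul n _) * (-Rmul n _) = - -(Rmul n _)
  erw [negRmul_mul, show ((⟨0,0,1,0⟩:ℍ[ℝ]) * ⟨0,0,0,1⟩) = ⟨0,1,0,0⟩ by ext <;> simp, neg_neg]
lemma I20 : Istd n 2 * Istd n 0 = Istd n 1 := by
  show (-Rmul n _) * (-Rmul n _) = -(Rmul n _)
  erw [negRmul_mul, show ((⟨0,1,0,0⟩:ℍ[ℝ]) * ⟨0,0,0,1⟩) = -⟨0,0,1,0⟩ by ext <;> simp, Rmul_neg]
lemma I02 : Istd n 0 * Istd n 2 = -Istd n 1 := by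
  show (-Rmul n _) * (-Rmul n _) = - -(Rmul n _)
  erw [negRmul_mul, show ((⟨0,0,0,1⟩:ℍ[ℝ]) * ⟨0,1,0,0⟩) = ⟨0,0,1,0⟩ by ext <;> simp, neg_neg]

lemma I00' (x) : Istd n 0 (Istd n 0 x) = -x := by
  have := LinearMap.ext_iff.mp (I00 n) x; simpa [Module.End.mul_apply] using this
lemma I11' (x) : Istd n 1 (Istd n 1 x) = -x := by
  have := LinearMap.ext_iff.mp (I11 n) x; simpa [Module.End.mul_apply] using this
lemma I22' (x) : Istd n 2 (Istd n 2 x) = -x := by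
  have := LinearMap.ext_iff.mp (I22 n) x; simpa [Module.End.mul_apply] using this
lemma I01' (x) : Istd n 0 (Istd n 1 x) = Istd n 2 x := by
  have := LinearMap.ext_iff.mp (I01 n) x; simpa [Module.End.mul_apply] using this
lemma I10' (x) : Istd n 1 (Istd n 0 x) = -Istd n 2 x := by
  have := LinearMap.ext_iff.mp (I10 n) x; simpa [Module.End.mul_apply] using this
lemma I12' (x) : Istd n 1 (Istd n 2 x) = Istd n 0 x := by
  have := LinearMap.ext_iff.mp (I12 n) x; simpa [Module.End.mul_apply] using this
lemma I21' (x) : Istd n 2 (Istd n 1 x) = -Istd n 0 x := by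
  have := LinearMap.ext_iff.mp (I21 n) x; simpa [Module.End.mul_apply] using this
lemma I20' (x) : Istd n 2 (Istd n 0 x) = Istd n 1 x := by
  have := LinearMap.ext_iff.mp (I20 n) x; simpa [Module.End.mul_apply] using this
lemma I02' (x) : Istd n 0 (Istd n 2 x) = -Istd n 1 x := by
  have := LinearMap.ext_iff.mp (I02 n) x; simpa [Module.End.mul_apply] using this
end

section
variable (n : ℕ) (vstar : (Fin n → ℍ[ℝ]) →ₗ[ℝ] ℝ) (v : Fin n → ℍ[ℝ])

private noncomputable def Aop : Module.End ℝ (Fin n → ℍ[ℝ]) :=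
  vstar v • (1 : Module.End ℝ (Fin n → ℍ[ℝ])) + vstar.smulRight v
    - ∑ α : Fin 3,
      (vstar (Istd n α v) • Istd n α + (vstar ∘ₗ Istd n α).smulRight (Istd n α v))

lemma bracket0 :
    ⁅Aop n vstar v, Istd n 0⁆
      = (2 * vstar (Istd n 1 v)) • Istd n 2 - (2 * vstar (Istd n 2 v)) • Istd n 1 := by
  apply LinearMap.ext; intro w
  simp only [Aop, Ring.lie_def, LinearMap.sub_apply, LinearMap.add_apply, Module.End.mul_apply,
    LinearMap.smul_apply, Module.End.one_apply, LinearMap.smulRight_apply, LinearMap.comp_apply,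
    LinearMap.coe_sum, Finset.sum_apply, Fin.sum_univ_three, map_add, map_sub, map_smul,
    map_neg, I00', I11', I22', I01', I10', I12', I21', I20', I02', smul_neg, neg_neg]
  module

lemma bracket1 :
    ⁅Aop n vstar v, Istd n 1⁆
      = (2 * vstar (Istd n 2 v)) • Istd n 0 - (2 * vstar (Istd n 0 v)) • Istd n 2 := by
  apply LinearMap.ext; intro w
  simp only [Aop, Ring.lie_def, LinearMap.sub_apply, LinearMap.add_apply, Module.End.mul_apply,
    LinearMap.smul_apply, Module.End.one_apply, LinearMap.smulRight_apply, LinearMap.comp_apply,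
    LinearMap.coe_sum, Finset.sum_apply, Fin.sum_univ_three, map_add, map_sub, map_smul,
    map_neg, I00', I11', I22', I01', I10', I12', I21', I20', I02', smul_neg, neg_neg]
  module

lemma bracket2 :
    ⁅Aop n vstar v, Istd n 2⁆
      = (2 * vstar (Istd n 0 v)) • Istd n 1 - (2 * vstar (Istd n 1 v)) • Istd n 0 := by
  apply LinearMap.ext; intro w
  simp only [Aop, Ring.lie_def, LinearMap.sub_apply, LinearMap.add_apply, Module.End.mul_apply,
    LinearMap.smul_apply, Module.End.one_apply, LinearMap.smulRight_apply, LinearMap.comp_apply,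
    LinearMap.coe_sum, Finset.sum_apply, Fin.sum_univ_three, map_add, map_sub, map_smul,
    map_neg, I00', I11', I22', I01', I10', I12', I21', I20', I02', smul_neg, neg_neg]
  module

lemma Istd_mem_Qstd (α : Fin 3) : Istd n α ∈ Qstd n :=
  Submodule.subset_span ⟨α, rfl⟩
end

/-- For each `v* ∈ V*` and `v ∈ V`, the endomorphism
`w ↦ v*(v) w + v*(w) v − Σ_α (v*(I_α v) I_α w + v*(I_α w) I_α v)` lies in
`gl_n(ℍ) ⊕ sp₁`, the normalizer of `Q` in `gl(V)`: its bracket with any `J ∈ Q`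
stays in `Q`. -/
theorem prolongation_formula_normalizes_Q
    (n : ℕ) (vstar : (Fin n → ℍ[ℝ]) →ₗ[ℝ] ℝ) (v : Fin n → ℍ[ℝ]) :
    ∀ J ∈ Qstd n,
      ⁅(vstar v • (1 : Module.End ℝ (Fin n → ℍ[ℝ])) + vstar.smulRight v
          - ∑ α : Fin 3,
            (vstar (Istd n α v) • Istd n α
              + (vstar ∘ₗ Istd n α).smulRight (Istd n α v))), J⁆ ∈ Qstd n := by
  intro J hJ
  show ⁅Aop n vstar v, J⁆ ∈ Qstd n
  induction hJ using Submodule.span_induction with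
  | mem x hx =>
    obtain ⟨β, rfl⟩ := hx
    fin_cases β
    · rw [show (⟨0, by norm_num⟩ : Fin 3) = 0 from rfl, bracket0]
      exact sub_mem (Submodule.smul_mem _ _ (Istd_mem_Qstd n 2))
        (Submodule.smul_mem _ _ (Istd_mem_Qstd n 1))
    · rw [show (⟨1, by norm_num⟩ : Fin 3) = 1 from rfl, bracket1]
      exact sub_mem (Submodule.smul_mem _ _ (Istd_mem_Qstd n 0))
        (Submodule.smul_mem _ _ (Istd_mem_Qstd n 2))
    · rw [show (⟨2, by norm_num⟩ : Fin 3) = 2 from rfl, bracket2]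
      exact sub_mem (Submodule.smul_mem _ _ (Istd_mem_Qstd n 1))
        (Submodule.smul_mem _ _ (Istd_mem_Qstd n 0))
  | zero => rw [Ring.lie_def, mul_zero, zero_mul, sub_zero]; exact zero_mem _
  | add x y _ _ hx hy => rw [Ring.lie_def] at hx hy ⊢; rw [mul_add, add_mul, add_sub_add_comm]; exact add_mem hx hy
  | smul c x _ hx => rw [Ring.lie_def] at hx ⊢; rw [mul_smul_comm, smul_mul_assoc, ← smul_sub]; exact Submodule.smul_mem _ _ hx
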